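/- Let a > 0 and A ∈ ℝ, and define g(u) = e^{−A²u/2} · Σ_{n∈ℤ} (−1)^n e^{−n²a²/(2u)} for u > 0. Then ∫_0^∞ u^{−3/2} ( √(g(u)) − 1 )² du < ∞. (This establishes that the Meixner time-change subordinator, whose Lévy density is (δa/√(2πu³)) g(u), is absolutely continuous with respect to the one-sided stable 1/2 subordinator, whose Lévy density is proportional to u^{−3/2}.) -/

import Mathlib

open MeasureTheory Real Set

private lemma theta_p_summable {q : ℝ} (hq0 : 0 ≤ q) (hq1 : q < 1) :
    Summable (fun n : ℕ => q ^ (n ^ 2)) := by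
  apply Summable.of_nonneg_of_le (fun n => pow_nonneg hq0 _)
    (fun n => pow_le_pow_of_le_one hq0 hq1.le (Nat.le_self_pow two_ne_zero n))
  exact summable_geometric_of_lt_one hq0 hq1

private lemma theta_summable_nat {q : ℝ} (hq0 : 0 ≤ q) (hq1 : q < 1) :
    Summable (fun n : ℕ => (-1 : ℝ) ^ n * q ^ (n ^ 2)) := by
  apply Summable.of_norm_bounded (theta_p_summable hq0 hq1)
  intro n
  have : ‖(-1 : ℝ) ^ n * q ^ (n ^ 2)‖ = q ^ (n ^ 2) := by
    rw [norm_mul, norm_pow, norm_neg, norm_one, one_pow, one_mul,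
      norm_pow, Real.norm_eq_abs, abs_of_nonneg hq0]
  exact this.le

private lemma theta_T_bounds {q : ℝ} (hq0 : 0 ≤ q) (hq1 : q < 1) :
    -q ≤ (∑' n : ℕ, (-1 : ℝ) ^ (n + 1) * q ^ ((n + 1) ^ 2)) ∧
      (∑' n : ℕ, (-1 : ℝ) ^ (n + 1) * q ^ ((n + 1) ^ 2)) ≤ 0 := by
  set p : ℕ → ℝ := fun n => q ^ (n ^ 2) with hp_def
  have hp : Summable p := theta_p_summable hq0 hq1
  have pmono : ∀ {i j : ℕ}, i ≤ j → p j ≤ p i := fun h =>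
    pow_le_pow_of_le_one hq0 hq1.le (Nat.pow_le_pow_left h 2)
  have pnn : ∀ n, 0 ≤ p n := fun n => pow_nonneg hq0 _
  have h1 : Summable (fun k : ℕ => p (2 * k + 1)) := hp.comp_injective (fun x y h => by omega)
  have h2 : Summable (fun k : ℕ => p (2 * k + 2)) := hp.comp_injective (fun x y h => by omega)
  have h3 : Summable (fun k : ℕ => p (2 * k + 3)) := hp.comp_injective (fun x y h => by omega)
  -- the series h n = (-1)^(n+1) p (n+1)
  set h : ℕ → ℝ := fun n => (-1 : ℝ) ^ (n + 1) * p (n + 1) with hh_def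
  have he : (fun k : ℕ => h (2 * k)) = fun k => -p (2 * k + 1) := by
    funext k
    simp [hh_def, pow_succ, pow_mul]
  have ho : (fun k : ℕ => h (2 * k + 1)) = fun k => p (2 * k + 2) := by
    funext k
    simp [hh_def, pow_succ, pow_mul]
  have hhe : Summable (fun k : ℕ => h (2 * k)) := by rw [he]; exact h1.neg
  have hho : Summable (fun k : ℕ => h (2 * k + 1)) := by rw [ho]; exact h2
  have hT : (∑' n : ℕ, h n) = (∑' k : ℕ, -p (2 * k + 1)) + ∑' k : ℕ, p (2 * k + 2) := by
    rw [← tsum_even_add_odd hhe hho, he, ho]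
  constructor
  · -- lower bound
    rw [hT, tsum_neg]
    have hshift : (∑' k : ℕ, p (2 * k + 1)) = p 1 + ∑' k : ℕ, p (2 * k + 3) := by
      rw [Summable.tsum_eq_zero_add h1]
      congr 1
    have hle : (∑' k : ℕ, p (2 * k + 3)) ≤ ∑' k : ℕ, p (2 * k + 2) :=
      Summable.tsum_le_tsum (fun k => pmono (by omega)) h3 h2
    have hq_eq : p 1 = q := by simp [hp_def]
    rw [hshift, hq_eq]
    linarith
  · rw [hT, tsum_neg]
    have hle : (∑' k : ℕ, p (2 * k + 2)) ≤ ∑' k : ℕ, p (2 * k + 1) :=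
      Summable.tsum_le_tsum (fun k => pmono (by omega)) h2 h1
    linarith

private lemma theta_bounds {q : ℝ} (hq0 : 0 ≤ q) (hq1 : q < 1) :
    1 - 2 * q ≤ (∑' n : ℤ, (-1 : ℝ) ^ n * q ^ (n.natAbs ^ 2)) ∧
      (∑' n : ℤ, (-1 : ℝ) ^ n * q ^ (n.natAbs ^ 2)) ≤ 1 := by
  set f : ℤ → ℝ := fun n => (-1 : ℝ) ^ n * q ^ (n.natAbs ^ 2) with hf_def
  have hfnat : (fun n : ℕ => f (n : ℤ)) = fun n : ℕ => (-1 : ℝ) ^ n * q ^ (n ^ 2) := by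
    funext n; simp [hf_def]
  have hfneg : (fun n : ℕ => f (-((n : ℤ) + 1))) =
      fun n : ℕ => (-1 : ℝ) ^ (n + 1) * q ^ ((n + 1) ^ 2) := by
    funext n
    have h1 : (-((n : ℤ) + 1)).natAbs = n + 1 := by omega
    have h2 : (-1 : ℝ) ^ (-((n : ℤ) + 1)) = (-1 : ℝ) ^ (n + 1) := by
      rw [zpow_neg, ← zpow_natCast]
      push_cast
      rw [← inv_zpow, inv_neg, inv_one]
    show (-1 : ℝ) ^ (-((n : ℤ) + 1)) * q ^ ((-((n : ℤ) + 1)).natAbs ^ 2) =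
      (-1 : ℝ) ^ (n + 1) * q ^ ((n + 1) ^ 2)
    rw [h1, h2]
  have hs : Summable (fun n : ℕ => (-1 : ℝ) ^ n * q ^ (n ^ 2)) := theta_summable_nat hq0 hq1
  have hs1 : Summable (fun n : ℕ => f (n : ℤ)) := by rw [hfnat]; exact hs
  have hs2 : Summable (fun n : ℕ => f (-((n : ℤ) + 1))) := by
    rw [hfneg]
    exact hs.comp_injective (fun x y hxy => by omega)
  have htsum : (∑' n : ℤ, f n) = (∑' n : ℕ, f (n : ℤ)) + ∑' n : ℕ, f (-((n : ℤ) + 1)) :=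
    tsum_of_nat_of_neg_add_one hs1 hs2
  have h0 : (∑' n : ℕ, f (n : ℤ)) =
      1 + ∑' n : ℕ, (-1 : ℝ) ^ (n + 1) * q ^ ((n + 1) ^ 2) := by
    rw [hfnat, Summable.tsum_eq_zero_add hs]
    norm_num
  have hT := theta_T_bounds hq0 hq1
  rw [htsum, h0, hfneg]
  constructor <;> linarith [hT.1, hT.2]

private lemma theta_rewrite (a u : ℝ) (hu : 0 < u) :
    (∑' n : ℤ, (-1 : ℝ) ^ n * Real.exp (-((n : ℝ) ^ 2 * a ^ 2) / (2 * u))) =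
      ∑' n : ℤ, (-1 : ℝ) ^ n * (Real.exp (-(a ^ 2 / (2 * u)))) ^ (n.natAbs ^ 2) := by
  refine tsum_congr fun n => ?_
  congr 1
  rw [← Real.exp_nat_mul]
  congr 1
  have : ((n.natAbs ^ 2 : ℕ) : ℝ) = (n : ℝ) ^ 2 := by
    push_cast [Nat.cast_natAbs]
    rw [sq_abs]
  rw [this]
  ring

/-- Sato's criterion for the Meixner time-change subordinator: with
`g(u) = e^{-A²u/2} Σ_{n∈ℤ} (-1)^n e^{-n²a²/(2u)}`, the integral
`∫_0^∞ u^{-3/2} (√g(u) - 1)² du` is finite, so the Meixner subordinator is absolutely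
continuous with respect to the one-sided stable `1/2` subordinator. -/
theorem meixner_subordinator_absolutely_continuous (a A : ℝ) (ha : 0 < a) :
    ∫⁻ u in Ioi (0:ℝ),
        ENNReal.ofReal (u ^ (-(3/2) : ℝ) *
          (Real.sqrt (Real.exp (-(A^2 * u / 2)) *
              ∑' n : ℤ, (-1 : ℝ) ^ n * Real.exp (-((n:ℝ)^2 * a^2) / (2*u))) - 1)^2) < ⊤ := by
  set C : ℝ := A ^ 2 / 2 + 4 / a ^ 2 with hC_def
  -- pointwise bounds
  have key : ∀ u : ℝ, 0 < u →
      (Real.sqrt (Real.exp (-(A^2 * u / 2)) *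
          ∑' n : ℤ, (-1 : ℝ) ^ n * Real.exp (-((n:ℝ)^2 * a^2) / (2*u))) - 1)^2 ≤ min 1 (C * u) := by
    intro u hu
    set q : ℝ := Real.exp (-(a ^ 2 / (2 * u))) with hq_def
    have hq0 : 0 ≤ q := (Real.exp_pos _).le
    have hq1 : q < 1 := by
      rw [hq_def, Real.exp_lt_one_iff]
      have : 0 < a ^ 2 / (2 * u) := by positivity
      linarith
    have hqu : q ≤ 2 * u / a ^ 2 := by
      have hx : 0 < a ^ 2 / (2 * u) := by positivity
      have h1 : q ≤ (a ^ 2 / (2 * u))⁻¹ := by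
        rw [hq_def, Real.exp_neg]
        exact inv_anti₀ hx (le_trans (by linarith) (Real.add_one_le_exp _))
      rwa [inv_div] at h1
    set S : ℝ := ∑' n : ℤ, (-1 : ℝ) ^ n * Real.exp (-((n:ℝ)^2 * a^2) / (2*u)) with hS_def
    have hSq : S = ∑' n : ℤ, (-1 : ℝ) ^ n * q ^ (n.natAbs ^ 2) := theta_rewrite a u hu
    obtain ⟨hS_lb, hS_ub⟩ : 1 - 2 * q ≤ S ∧ S ≤ 1 := by
      rw [hSq]; exact theta_bounds hq0 hq1
    set E : ℝ := Real.exp (-(A ^ 2 * u / 2)) with hE_def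
    have hE0 : 0 < E := Real.exp_pos _
    have hE1 : E ≤ 1 := Real.exp_le_one_iff.2 (neg_nonpos.2 (by positivity))
    have hE_lb : 1 - A ^ 2 * u / 2 ≤ E := by
      have := Real.add_one_le_exp (-(A ^ 2 * u / 2))
      linarith
    set g : ℝ := E * S with hg_def
    have hg1 : g ≤ 1 := by
      calc g ≤ E * 1 := mul_le_mul_of_nonneg_left hS_ub hE0.le
        _ ≤ 1 := by linarith
    have hsqrt1 : Real.sqrt g ≤ 1 := by
      rw [show (1:ℝ) = Real.sqrt 1 by simp]
      exact Real.sqrt_le_sqrt hg1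
    have hsqrt_ge : g ≤ Real.sqrt g := by
      rcases le_or_gt g 0 with h | h
      · exact h.trans (Real.sqrt_nonneg g)
      · nlinarith [Real.sq_sqrt h.le, Real.sqrt_nonneg g]
    have hkey1 : (Real.sqrt g - 1) ^ 2 ≤ 1 - Real.sqrt g := by
      nlinarith [Real.sqrt_nonneg g]
    have hg_lb : 1 - g ≤ A ^ 2 * u / 2 + 2 * q := by
      have h1 : E * (1 - S) ≤ 1 - S := by
        have : 0 ≤ 1 - S := by linarith
        nlinarith
      have h2 : 1 - S ≤ 2 * q := by linarith
      nlinarith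
    have hCu : 1 - g ≤ C * u := by
      have h4 : 4 * u / a ^ 2 = 2 * (2 * u / a ^ 2) := by ring
      have : 2 * q ≤ 4 * u / a ^ 2 := by rw [h4]; linarith
      have ha2 : (0:ℝ) < a ^ 2 := by positivity
      rw [hC_def]
      have : 4 / a ^ 2 * u = 4 * u / a ^ 2 := by ring
      nlinarith
    refine le_min ?_ ?_
    · nlinarith [Real.sqrt_nonneg g]
    · calc (Real.sqrt g - 1) ^ 2 ≤ 1 - Real.sqrt g := hkey1
        _ ≤ 1 - g := by linarith
        _ ≤ C * u := hCu
  have hC0 : 0 ≤ C := by positivity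
  -- split the domain
  have hsplit : Ioi (0:ℝ) = Ioo (0:ℝ) 1 ∪ Ici (1:ℝ) := by
    ext u
    simp only [mem_Ioi, mem_union, mem_Ioo, mem_Ici]
    constructor
    · intro h; rcases lt_or_ge u 1 with h1 | h1
      · exact Or.inl ⟨h, h1⟩
      · exact Or.inr h1
    · rintro (⟨h, _⟩ | h) <;> linarith
  set F : ℝ → ENNReal := fun u =>
    ENNReal.ofReal (u ^ (-(3/2) : ℝ) *
      (Real.sqrt (Real.exp (-(A^2 * u / 2)) *
          ∑' n : ℤ, (-1 : ℝ) ^ n * Real.exp (-((n:ℝ)^2 * a^2) / (2*u))) - 1)^2) with hF_def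
  have hbound1 : ∫⁻ u in Ioo (0:ℝ) 1, F u ≤
      ∫⁻ u in Ioo (0:ℝ) 1, ENNReal.ofReal (C * u ^ (-(1/2) : ℝ)) := by
    refine setLIntegral_mono' measurableSet_Ioo fun u hu => ?_
    apply ENNReal.ofReal_le_ofReal
    have hu0 : 0 < u := hu.1
    have h1 := (key u hu0).trans (min_le_right _ _)
    have hr : u ^ (-(3/2) : ℝ) * u = u ^ (-(1/2) : ℝ) := by
      rw [show (-(1/2) : ℝ) = -(3/2) + 1 by norm_num, Real.rpow_add hu0, Real.rpow_one]
    calc u ^ (-(3/2) : ℝ) * (Real.sqrt _ - 1) ^ 2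
        ≤ u ^ (-(3/2) : ℝ) * (C * u) :=
          mul_le_mul_of_nonneg_left h1 (Real.rpow_nonneg hu0.le _)
      _ = C * (u ^ (-(3/2) : ℝ) * u) := by ring
      _ = C * u ^ (-(1/2) : ℝ) := by rw [hr]
  have hbound2 : ∫⁻ u in Ici (1:ℝ), F u ≤
      ∫⁻ u in Ici (1:ℝ), ENNReal.ofReal (u ^ (-(3/2) : ℝ)) := by
    refine setLIntegral_mono' measurableSet_Ici fun u hu => ?_
    apply ENNReal.ofReal_le_ofReal
    have hu0 : (0:ℝ) < u := lt_of_lt_of_le one_pos hu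
    have h1 := (key u hu0).trans (min_le_left _ _)
    calc u ^ (-(3/2) : ℝ) * (Real.sqrt _ - 1) ^ 2
        ≤ u ^ (-(3/2) : ℝ) * 1 :=
          mul_le_mul_of_nonneg_left h1 (Real.rpow_nonneg hu0.le _)
      _ = u ^ (-(3/2) : ℝ) := mul_one _
  have hfin1 : ∫⁻ u in Ioo (0:ℝ) 1, ENNReal.ofReal (C * u ^ (-(1/2) : ℝ)) < ⊤ := by
    have hint : IntegrableOn (fun u : ℝ => C * u ^ (-(1/2) : ℝ)) (Ioo 0 1) := by
      apply Integrable.const_mul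
      exact (intervalIntegral.integrableOn_Ioo_rpow_iff one_pos).2 (by norm_num)
    exact hint.lintegral_lt_top
  have hfin2 : ∫⁻ u in Ici (1:ℝ), ENNReal.ofReal (u ^ (-(3/2) : ℝ)) < ⊤ := by
    have hint : IntegrableOn (fun u : ℝ => u ^ (-(3/2) : ℝ)) (Ici 1) := by
      rw [integrableOn_Ici_iff_integrableOn_Ioi]
      exact integrableOn_Ioi_rpow_of_lt (by norm_num) one_pos
    exact hint.lintegral_lt_top
  calc ∫⁻ u in Ioi (0:ℝ), F u = ∫⁻ u in Ioo (0:ℝ) 1 ∪ Ici (1:ℝ), F u := by rw [← hsplit]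
    _ ≤ (∫⁻ u in Ioo (0:ℝ) 1, F u) + ∫⁻ u in Ici (1:ℝ), F u := lintegral_union_le _ _ _
    _ ≤ (∫⁻ u in Ioo (0:ℝ) 1, ENNReal.ofReal (C * u ^ (-(1/2) : ℝ))) +
        ∫⁻ u in Ici (1:ℝ), ENNReal.ofReal (u ^ (-(3/2) : ℝ)) := add_le_add hbound1 hbound2
    _ < ⊤ := ENNReal.add_lt_top.2 ⟨hfin1, hfin2⟩
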